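/- rot(P^n(B)) is a factor of P^(n+1)(A) for every n, where rot is the rotation A ↦ B, B ↦ C, C ↦ A. -/
import Mathlib


inductive T where
  | A | B | C
deriving DecidableEq, Repr

open T

def P : T → List T
  | A => [A,B,C,B,A,C,B,C,A,B,C,B,A]
  | B => [B,C,A,C,B,A,C,A,B,C,A,C,B]
  | C => [C,A,B,A,C,B,A,B,C,A,B,A,C]

def Pw (w : List T) : List T := w.flatMap P

def SqFree (w : List T) : Prop := ∀ x : List T, x ≠ [] → ¬ (x ++ x) <:+: w

def rot : T → T
  | A => B
  | B => C
  | C => A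

def rotw (w : List T) : List T := w.map rot

def refT : T → T
  | A => A
  | B => C
  | C => B

def reflw (w : List T) : List T := w.map refT

def OccursAt (w v : List T) (i : ℕ) : Prop := (v.drop i).take w.length = w

lemma rot_comm (w : List T) : rotw (Pw w) = Pw (rotw w) := by
  induction w with
  | nil => rfl
  | cons a t ih =>
    simp only [Pw, List.flatMap_cons, rotw, List.map_cons, List.map_append] at *
    rw [show (P a).map rot = P (rot a) by cases a <;> rfl]
    exact congrArg _ ih

lemma rot_iter (n : ℕ) (w : List T) : rotw (Pw^[n] w) = Pw^[n] (rotw w) := by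
  induction n generalizing w with
  | zero => rfl
  | succ n ih => rw [Function.iterate_succ_apply, Function.iterate_succ_apply, ih, rot_comm]

lemma Pw_infix {u v : List T} (h : u <:+: v) : Pw u <:+: Pw v := by
  obtain ⟨s, t, rfl⟩ := h
  exact ⟨Pw s, Pw t, by simp [Pw]⟩

theorem stmt8 (n : ℕ) : rotw (Pw^[n] [B]) <:+: Pw^[n + 1] [A] := by
  rw [rot_iter]
  have h : ([C] : List T) <:+: Pw [A] := ⟨[A,B], [B,A,C,B,C,A,B,C,B,A], rfl⟩
  have : Pw^[n] (rotw [B]) <:+: Pw^[n] (Pw [A]) := by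
    induction n with
    | zero => exact h
    | succ n ih => rw [Function.iterate_succ_apply', Function.iterate_succ_apply']; exact Pw_infix ih
  simpa [Function.iterate_succ_apply] using this
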